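/- Let A ∈ ℤ^{(n−1)×n} satisfy the regularity assumptions (so m = n−1), let z ∈ ℤ^n be a primitive integral vector generating the one-dimensional lattice {x ∈ ℤ^n : A x = 0}, let a_1, …, a_n ∈ ℤ^{n−1} be the columns of A, and set u = Σ_{i : z_i ≥ 0} z_i a_i. Then g_1(A) = min{γ ∈ ℝ, γ ≥ 0 : γ·v ∈ C + u − v}, where C is the cone generated by the columns of A and v = A·1. -/

import Mathlib

open scoped BigOperators
open Matrix

noncomputable section

/-- The real matrix obtained from an integer matrix. -/
def Rmat {m n : ℕ} (A : Matrix (Fin m) (Fin n) ℤ) : Matrix (Fin m) (Fin n) ℝ :=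
  A.map (Int.cast : ℤ → ℝ)

/-- The real vector obtained from an integer vector. -/
def Rvec {m : ℕ} (b : Fin m → ℤ) : Fin m → ℝ := fun i => (b i : ℝ)

/-- The knapsack polytope P(A,b) = {x ≥ 0 : A x = b}. -/
def knap {m n : ℕ} (A : Matrix (Fin m) (Fin n) ℤ) (b : Fin m → ℝ) : Set (Fin n → ℝ) :=
  {x | (∀ i, 0 ≤ x i) ∧ (Rmat A).mulVec x = b}

/-- The set F_s(A) of integer vectors b for which P(A,b) contains at least s integer points. -/
def feas {m n : ℕ} (s : ℕ) (A : Matrix (Fin m) (Fin n) ℤ) : Set (Fin m → ℤ) :=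
  {b | s ≤ Set.ncard {x : Fin n → ℤ | (∀ i, 0 ≤ x i) ∧ A.mulVec x = b}}

/-- The cone generated by the columns of A. -/
def coneOf {m n : ℕ} (A : Matrix (Fin m) (Fin n) ℤ) : Set (Fin m → ℝ) :=
  {y | ∃ x : Fin n → ℝ, (∀ i, 0 ≤ x i) ∧ (Rmat A).mulVec x = y}

/-- The generalized diagonal s-Frobenius number g_s(A, w). -/
def gDiag {m n : ℕ} (s : ℕ) (A : Matrix (Fin m) (Fin n) ℤ) (w : Fin m → ℝ) : ℝ :=
  sInf {t : ℝ | 0 ≤ t ∧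
    ∀ b : Fin m → ℤ, Rvec b ∈ interior ((fun c => t • w + c) '' coneOf A) → b ∈ feas s A}

/-- v = A·1 is the sum of the columns of A (as a real vector). -/
def vA {m n : ℕ} (A : Matrix (Fin m) (Fin n) ℤ) : Fin m → ℝ :=
  (Rmat A).mulVec (fun _ => 1)

/-- The diagonal s-Frobenius number g_s(A) = g_s(A, A·1). -/
def gFrob {m n : ℕ} (s : ℕ) (A : Matrix (Fin m) (Fin n) ℤ) : ℝ := gDiag s A (vA A)

/-- The regularity assumptions: the m×m minors of A have gcd 1, and the only
nonnegative real solution of A x = 0 is x = 0. -/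
def regular {m n : ℕ} (A : Matrix (Fin m) (Fin n) ℤ) : Prop :=
  Finset.univ.gcd (fun I : Fin m ↪ Fin n => (A.submatrix id ⇑I).det) = 1 ∧
  ∀ x : Fin n → ℝ, (∀ i, 0 ≤ x i) → (Rmat A).mulVec x = 0 → x = 0

/-- The s-covering radius of K with respect to L: the smallest μ > 0 such that every
point of the real span of L lies in y + μK for at least s distinct y ∈ L. -/
def muCov {N : ℕ} (s : ℕ) (K L : Set (Fin N → ℝ)) : ℝ :=
  sInf {μ : ℝ | 0 < μ ∧ ∀ x ∈ Submodule.span ℝ L,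
    ∃ T : Finset (Fin N → ℝ), ↑T ⊆ L ∧ s ≤ T.card ∧ ∀ y ∈ T, ∃ k ∈ K, x = y + μ • k}

/-- The set of absolute values of m×m minors of A. -/
def minorAbs {m n : ℕ} (A : Matrix (Fin m) (Fin n) ℤ) : Set ℤ :=
  {d | ∃ I : Fin m ↪ Fin n, d = |(A.submatrix id ⇑I).det|}

/-- m(A): the minimal absolute m×m minor of A. -/
def mMin {m n : ℕ} (A : Matrix (Fin m) (Fin n) ℤ) : ℤ := sInf (minorAbs A)

/-- M(A): the maximal absolute m×m minor of A. -/
def mMax {m n : ℕ} (A : Matrix (Fin m) (Fin n) ℤ) : ℤ := sSup (minorAbs A)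

/-- The lattice L_A^⊥ = {z ∈ ℤ^n : A z = 0}, viewed as a subset of ℝ^n. -/
def kerLat {m n : ℕ} (A : Matrix (Fin m) (Fin n) ℤ) : Set (Fin n → ℝ) :=
  {x | ∃ z : Fin n → ℤ, A.mulVec z = 0 ∧ x = Rvec z}

/-- √(det (A Aᵀ)). -/
def sqrtDet {m n : ℕ} (A : Matrix (Fin m) (Fin n) ℤ) : ℝ :=
  Real.sqrt (((A * Aᵀ).det : ℤ) : ℝ)

/-- The s-Frobenius number of a positive primitive integer vector. -/
def sFrob {n : ℕ} (s : ℕ) (a : Fin n → ℤ) : ℤ :=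
  sSup {b : ℤ | Set.ncard {x : Fin n → ℤ | (∀ i, 0 ≤ x i) ∧ ∑ i, a i * x i = b} < s}

/-- The full-rank lattice in ℝ^d with basis the columns of an invertible matrix B. -/
def latSet {d : ℕ} (B : Matrix (Fin d) (Fin d) ℝ) : Set (Fin d → ℝ) :=
  {x | ∃ z : Fin d → ℤ, x = B.mulVec (fun i => (z i : ℝ))}

/-- The absolute s-inhomogeneous minimum ϑ_s(K) = inf_L μ_s(K,L)/det(L)^{1/d}. -/
def theta (s d : ℕ) (K : Set (Fin d → ℝ)) : ℝ :=
  sInf {r : ℝ | ∃ B : Matrix (Fin d) (Fin d) ℝ, B.det ≠ 0 ∧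
    r = muCov s K (latSet B) / |B.det| ^ ((1 : ℝ) / d)}

/-- The standard simplex S_d ⊂ ℝ^d. -/
def stdSimplex' (d : ℕ) : Set (Fin d → ℝ) :=
  {x | (∀ i, 0 ≤ x i) ∧ ∑ i, x i ≤ 1}



/- ===== auxiliary lemmas ===== -/

lemma rmat_mulVec {m n : ℕ} (A : Matrix (Fin m) (Fin n) ℤ) (x : Fin n → ℤ) :
    (Rmat A).mulVec (Rvec x) = Rvec (A.mulVec x) := by
  funext j
  simp only [Rmat, Rvec, Matrix.mulVec, dotProduct, Matrix.map_apply]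
  push_cast
  ring

lemma exists_compl {n : ℕ} (I : Fin n ↪ Fin (n + 1)) :
    ∃ k, (∀ j, I j ≠ k) ∧ (∀ i, i ≠ k → ∃ j, I j = i) := by
  have hcard : (Finset.univ.image I)ᶜ.card = 1 := by
    rw [Finset.card_compl, Finset.card_image_of_injective _ I.injective]
    simp
  obtain ⟨k, hk⟩ := Finset.card_eq_one.mp hcard
  refine ⟨k, ?_, ?_⟩
  · intro j hj
    have : I j ∈ (Finset.univ.image I)ᶜ := by rw [hk]; simp [hj]
    simp at this
  · intro i hi
    have : i ∉ (Finset.univ.image I)ᶜ := by rw [hk]; simp [hi]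
    simpa using this

lemma sum_split {n : ℕ} {α : Type*} [AddCommMonoid α] (I : Fin n ↪ Fin (n + 1)) (k : Fin (n + 1))
    (h1 : ∀ j, I j ≠ k) (h2 : ∀ i, i ≠ k → ∃ j, I j = i) (g : Fin (n + 1) → α) :
    ∑ i, g i = (∑ j, g (I j)) + g k := by
  have himg : Finset.univ.image I = {k}ᶜ := by
    ext i
    simp only [Finset.mem_image, Finset.mem_compl, Finset.mem_singleton, Finset.mem_univ, true_and]
    constructor
    · rintro ⟨j, rfl⟩; exact h1 j
    · intro hi; obtain ⟨j, hj⟩ := h2 i hi; exact ⟨j, hj⟩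
  have := Finset.sum_add_sum_compl ({k}ᶜ : Finset (Fin (n+1))) g
  rw [compl_compl, Finset.sum_singleton] at this
  rw [← this, ← himg, Finset.sum_image (fun a _ b _ h => I.injective h)]

lemma mulVec_of_missing {n : ℕ} {α : Type*} [CommRing α] (B : Matrix (Fin n) (Fin (n + 1)) α)
    (I : Fin n ↪ Fin (n + 1)) (k : Fin (n + 1)) (h1 : ∀ j, I j ≠ k)
    (h2 : ∀ i, i ≠ k → ∃ j, I j = i) (w : Fin (n + 1) → α) (hw : w k = 0) :
    B.mulVec w = (B.submatrix id I).mulVec (w ∘ I) := by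
  funext r
  simp only [Matrix.mulVec, dotProduct, Matrix.submatrix_apply, id, Function.comp]
  rw [sum_split I k h1 h2 (fun i => B r i * w i), hw, mul_zero, add_zero]

lemma mulVec_eq_zero_of_det {n : ℕ} (M : Matrix (Fin n) (Fin n) ℝ) (hdet : M.det ≠ 0)
    (x : Fin n → ℝ) (hx : M.mulVec x = 0) : x = 0 := by
  have h1 : M⁻¹.mulVec (M.mulVec x) = x := by
    rw [Matrix.mulVec_mulVec, Matrix.nonsing_inv_mul _ (isUnit_iff_ne_zero.2 hdet),
      Matrix.one_mulVec]
  rw [hx, Matrix.mulVec_zero] at h1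
  exact h1.symm

lemma det_cast {n m : ℕ} (A : Matrix (Fin n) (Fin (m)) ℤ) (I : Fin n ↪ Fin m) :
    (((A.submatrix id ⇑I).det : ℤ) : ℝ) = ((Rmat A).submatrix id ⇑I).det := by
  have h := RingHom.map_det (Int.castRingHom ℝ) (A.submatrix id ⇑I)
  have h2 : ((A.submatrix id ⇑I).det : ℝ) = ((Int.castRingHom ℝ).mapMatrix (A.submatrix id ⇑I)).det := h
  rw [h2]
  congr 1


-- new material
lemma some_minor_ne {n : ℕ} (A : Matrix (Fin n) (Fin (n + 1)) ℤ)
    (hgcd : Finset.univ.gcd (fun I : Fin n ↪ Fin (n + 1) => (A.submatrix id ⇑I).det) = 1) :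
    ∃ I : Fin n ↪ Fin (n + 1), (A.submatrix id ⇑I).det ≠ 0 := by
  by_contra h
  push_neg at h
  have : Finset.univ.gcd (fun I : Fin n ↪ Fin (n + 1) => (A.submatrix id ⇑I).det) = 0 :=
    Finset.gcd_eq_zero_iff.2 (fun I _ => h I)
  rw [hgcd] at this
  exact one_ne_zero this

/-- extension of a vector along an embedding by zero -/
def extVec {n : ℕ} {α : Type*} [Zero α] (I : Fin n ↪ Fin (n + 1)) (y : Fin n → α) :
    Fin (n + 1) → α :=
  fun i => if h : ∃ j, I j = i then y (Classical.choose h) else 0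

lemma extVec_apply {n : ℕ} {α : Type*} [Zero α] (I : Fin n ↪ Fin (n + 1)) (y : Fin n → α)
    (j : Fin n) : extVec I y (I j) = y j := by
  have h : ∃ j', I j' = I j := ⟨j, rfl⟩
  simp only [extVec, dif_pos h]
  have := Classical.choose_spec h
  have hj : Classical.choose h = j := I.injective this
  rw [hj]

lemma extVec_k {n : ℕ} {α : Type*} [Zero α] (I : Fin n ↪ Fin (n + 1)) (y : Fin n → α)
    (k : Fin (n + 1)) (h1 : ∀ j, I j ≠ k) : extVec I y k = 0 := by
  have h : ¬ ∃ j, I j = k := by rintro ⟨j, hj⟩; exact h1 j hj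
  simp only [extVec, dif_neg h]

lemma key_vanish {n : ℕ} (A : Matrix (Fin n) (Fin (n + 1)) ℤ)
    (I : Fin n ↪ Fin (n + 1)) (hI : (A.submatrix id ⇑I).det ≠ 0)
    (k : Fin (n + 1)) (h1 : ∀ j, I j ≠ k) (h2 : ∀ i, i ≠ k → ∃ j, I j = i)
    (w : Fin (n + 1) → ℝ) (hw : (Rmat A).mulVec w = 0) (hwk : w k = 0) : w = 0 := by
  have hdet : ((Rmat A).submatrix id ⇑I).det ≠ 0 := by
    rw [← det_cast]
    exact_mod_cast hI
  have h := mulVec_of_missing (Rmat A) I k h1 h2 w hwk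
  rw [hw] at h
  have h0 : w ∘ ⇑I = 0 := mulVec_eq_zero_of_det _ hdet _ h.symm
  funext i
  by_cases hik : i = k
  · rw [hik, hwk]; rfl
  · obtain ⟨j, hj⟩ := h2 i hik
    have := congrFun h0 j
    simpa [hj] using this

lemma z_nonzero {n : ℕ} (z : Fin (n + 1) → ℤ) (hzprim : Finset.univ.gcd z = 1) : z ≠ 0 := by
  intro h
  rw [h] at hzprim
  have : Finset.univ.gcd (0 : Fin (n + 1) → ℤ) = 0 :=
    Finset.gcd_eq_zero_iff.2 (fun i _ => rfl)
  rw [this] at hzprim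
  exact one_ne_zero hzprim.symm

lemma Rvec_eq_zero {n : ℕ} {z : Fin n → ℤ} (h : Rvec z = 0) : z = 0 := by
  funext i
  have := congrFun h i
  simpa [Rvec] using this

lemma rmat_mulVec_z {n m : ℕ} (A : Matrix (Fin n) (Fin m) ℤ) (z : Fin m → ℤ)
    (hz : A.mulVec z = 0) : (Rmat A).mulVec (Rvec z) = 0 := by
  rw [rmat_mulVec, hz]
  funext i; simp [Rvec]

lemma real_kernel {n : ℕ} (A : Matrix (Fin n) (Fin (n + 1)) ℤ)
    (hgcd : Finset.univ.gcd (fun I : Fin n ↪ Fin (n + 1) => (A.submatrix id ⇑I).det) = 1)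
    (z : Fin (n + 1) → ℤ) (hzprim : Finset.univ.gcd z = 1) (hzker : A.mulVec z = 0)
    (w : Fin (n + 1) → ℝ) (hw : (Rmat A).mulVec w = 0) : ∃ c : ℝ, w = c • Rvec z := by
  obtain ⟨I, hI⟩ := some_minor_ne A hgcd
  obtain ⟨k, h1, h2⟩ := exists_compl I
  have hRz : (Rmat A).mulVec (Rvec z) = 0 := rmat_mulVec_z A z hzker
  have hzk : (z k : ℝ) ≠ 0 := by
    intro h0
    have : Rvec z = 0 := key_vanish A I hI k h1 h2 (Rvec z) hRz h0
    exact z_nonzero z hzprim (Rvec_eq_zero this)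
  refine ⟨w k / (z k : ℝ), ?_⟩
  have hw' : w - (w k / (z k : ℝ)) • Rvec z = 0 := by
    apply key_vanish A I hI k h1 h2
    · rw [Matrix.mulVec_sub, hw, Matrix.mulVec_smul, hRz, smul_zero, sub_zero]
    · simp only [Pi.sub_apply, Pi.smul_apply, smul_eq_mul, Rvec]
      field_simp
      ring
  have := sub_eq_zero.1 hw'
  exact this

lemma int_surj {n : ℕ} (A : Matrix (Fin n) (Fin (n + 1)) ℤ)
    (hgcd : Finset.univ.gcd (fun I : Fin n ↪ Fin (n + 1) => (A.submatrix id ⇑I).det) = 1)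
    (b : Fin n → ℤ) : ∃ x : Fin (n + 1) → ℤ, A.mulVec x = b := by
  set f : (Fin n ↪ Fin (n + 1)) → ℤ := fun I => (A.submatrix id ⇑I).det with hf
  -- 1 is an integer combination of the f I
  have hJ : (1 : ℤ) ∈ Submodule.span ℤ (Set.range f) := by
    obtain ⟨d, hd⟩ := Submodule.IsPrincipal.principal (Ideal.span (Set.range f))
    have hdvd : ∀ I, d ∣ f I := by
      intro I
      rw [← Ideal.mem_span_singleton]
      show f I ∈ Submodule.span ℤ {d}
      rw [← hd]
      exact Ideal.subset_span ⟨I, rfl⟩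
    have hd1 : d ∣ 1 := by
      rw [← hgcd]
      exact Finset.dvd_gcd (fun I _ => hdvd I)
    have : Ideal.span (Set.range f) = ⊤ := by
      rw [hd]
      show (Ideal.span {d} : Ideal ℤ) = ⊤
      rw [Ideal.span_singleton_eq_top]
      exact isUnit_of_dvd_one hd1
    have h1 : (1 : ℤ) ∈ Ideal.span (Set.range f) := this ▸ Submodule.mem_top
    exact h1
  obtain ⟨c, hc⟩ := (Submodule.mem_span_range_iff_exists_fun ℤ).1 hJ
  -- for each I, f I • b is in the image
  have hIm : ∀ I : Fin n ↪ Fin (n + 1), ∃ x : Fin (n + 1) → ℤ, A.mulVec x = f I • b := by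
    intro I
    obtain ⟨k, h1, h2⟩ := exists_compl I
    set M := A.submatrix id ⇑I with hM
    refine ⟨extVec I (M.adjugate.mulVec b), ?_⟩
    rw [mulVec_of_missing A I k h1 h2 _ (extVec_k I _ k h1)]
    have hcomp : (extVec I (M.adjugate.mulVec b)) ∘ ⇑I = M.adjugate.mulVec b := by
      funext j; exact extVec_apply I _ j
    rw [hcomp, Matrix.mulVec_mulVec, ← hM, Matrix.mul_adjugate, Matrix.smul_mulVec,
      Matrix.one_mulVec]
  choose xI hxI using hIm
  refine ⟨∑ I, c I • xI I, ?_⟩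
  have : A.mulVec (∑ I, c I • xI I) = ∑ I, c I • A.mulVec (xI I) :=
    calc A.mulVec (∑ I, c I • xI I) = A.mulVecLin (∑ I, c I • xI I) := rfl
      _ = ∑ I, A.mulVecLin (c I • xI I) := map_sum _ _ _
      _ = ∑ I, c I • A.mulVec (xI I) := by
          refine Finset.sum_congr rfl (fun I _ => ?_)
          rw [_root_.map_smul]; rfl
  rw [this]
  calc ∑ I, c I • A.mulVec (xI I) = ∑ I, (c I * f I) • b := by
        refine Finset.sum_congr rfl (fun I _ => ?_)
        rw [hxI I, smul_smul]
    _ = (∑ I, c I * f I) • b := by rw [Finset.sum_smul]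
    _ = b := by
        have : ∑ I, c I * f I = 1 := by simpa [smul_eq_mul] using hc
        rw [this, one_smul]

lemma z_mixed {n : ℕ} (A : Matrix (Fin n) (Fin (n + 1)) ℤ)
    (hreg : ∀ x : Fin (n + 1) → ℝ, (∀ i, 0 ≤ x i) → (Rmat A).mulVec x = 0 → x = 0)
    (z : Fin (n + 1) → ℤ) (hzprim : Finset.univ.gcd z = 1) (hzker : A.mulVec z = 0) :
    (∃ i, 0 < z i) ∧ (∃ j, z j < 0) := by
  have hz0 : z ≠ 0 := z_nonzero z hzprim
  constructor
  · by_contra h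
    push_neg at h
    have h1 : ∀ i, 0 ≤ (Rvec (-z)) i := by
      intro i; simp only [Rvec, Pi.neg_apply]
      exact_mod_cast neg_nonneg.2 (h i)
    have h2 : (Rmat A).mulVec (Rvec (-z)) = 0 := by
      apply rmat_mulVec_z
      rw [Matrix.mulVec_neg, hzker, neg_zero]
    have := hreg _ h1 h2
    apply hz0
    have hz' := Rvec_eq_zero this
    funext i
    have := congrFun hz' i
    simpa using this
  · by_contra h
    push_neg at h
    have h1 : ∀ i, 0 ≤ (Rvec z) i := by
      intro i; simp only [Rvec]
      exact_mod_cast h i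
    have h2 : (Rmat A).mulVec (Rvec z) = 0 := rmat_mulVec_z A z hzker
    exact hz0 (Rvec_eq_zero (hreg _ h1 h2))

lemma real_surj {n : ℕ} (A : Matrix (Fin n) (Fin (n + 1)) ℤ)
    (hgcd : Finset.univ.gcd (fun I : Fin n ↪ Fin (n + 1) => (A.submatrix id ⇑I).det) = 1) :
    Function.Surjective ((Rmat A).mulVecLin) := by
  obtain ⟨I, hI⟩ := some_minor_ne A hgcd
  obtain ⟨k, h1, h2⟩ := exists_compl I
  intro b
  set M := (Rmat A).submatrix id ⇑I with hM
  have hdet : M.det ≠ 0 := by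
    rw [← det_cast]
    exact_mod_cast hI
  refine ⟨extVec I (M⁻¹.mulVec b), ?_⟩
  rw [Matrix.mulVecLin_apply, mulVec_of_missing (Rmat A) I k h1 h2 _ (extVec_k I _ k h1)]
  have hcomp : (extVec I (M⁻¹.mulVec b)) ∘ ⇑I = M⁻¹.mulVec b := by
    funext j; exact extVec_apply I _ j
  rw [hcomp, ← hM, Matrix.mulVec_mulVec, Matrix.mul_nonsing_inv _ (isUnit_iff_ne_zero.2 hdet),
    Matrix.one_mulVec]

lemma open_map_A {n : ℕ} (A : Matrix (Fin n) (Fin (n + 1)) ℤ)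
    (hgcd : Finset.univ.gcd (fun I : Fin n ↪ Fin (n + 1) => (A.submatrix id ⇑I).det) = 1) :
    IsOpenMap (fun y : Fin (n + 1) → ℝ => (Rmat A).mulVec y) := by
  let f := LinearMap.toContinuousLinearMap ((Rmat A).mulVecLin)
  have hsurj : Function.Surjective ⇑f := by
    have : ⇑f = ⇑((Rmat A).mulVecLin) := rfl
    rw [this]
    exact real_surj A hgcd
  have := ContinuousLinearMap.isOpenMap f hsurj
  exact this

lemma orthant_open {N : ℕ} : IsOpen {y : Fin N → ℝ | ∀ i, 0 < y i} := by
  have : {y : Fin N → ℝ | ∀ i, 0 < y i} = Set.pi Set.univ (fun _ => Set.Ioi 0) := by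
    ext y; simp [Set.mem_pi]
  rw [this]
  exact isOpen_set_pi Set.finite_univ (fun a _ => isOpen_Ioi)

lemma pos_subset_interior {n : ℕ} (A : Matrix (Fin n) (Fin (n + 1)) ℤ)
    (hgcd : Finset.univ.gcd (fun I : Fin n ↪ Fin (n + 1) => (A.submatrix id ⇑I).det) = 1)
    (x : Fin n → ℝ) (y : Fin (n + 1) → ℝ) (hy : ∀ i, 0 < y i)
    (hxy : (Rmat A).mulVec y = x) : x ∈ interior (coneOf A) := by
  have hsub : (fun y : Fin (n + 1) → ℝ => (Rmat A).mulVec y) '' {y | ∀ i, 0 < y i} ⊆ coneOf A := by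
    rintro w ⟨y', hy', rfl⟩
    exact ⟨y', fun i => (hy' i).le, rfl⟩
  exact interior_maximal hsub (open_map_A A hgcd _ orthant_open) ⟨y, hy, hxy⟩

lemma interior_subset_pos {n : ℕ} (A : Matrix (Fin n) (Fin (n + 1)) ℤ)
    (x : Fin n → ℝ) (hx : x ∈ interior (coneOf A)) :
    ∃ y : Fin (n + 1) → ℝ, (∀ i, 0 < y i) ∧ (Rmat A).mulVec y = x := by
  set v : Fin n → ℝ := (Rmat A).mulVec (1 : Fin (n + 1) → ℝ) with hv
  obtain ⟨ε, hε, hball⟩ := Metric.isOpen_iff.1 isOpen_interior x hx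
  set δ : ℝ := ε / (2 * (‖v‖ + 1)) with hδ
  have hnorm : (0:ℝ) < ‖v‖ + 1 := by positivity
  have hδpos : 0 < δ := by positivity
  have hmem : x - δ • v ∈ interior (coneOf A) := by
    apply hball
    rw [Metric.mem_ball, dist_eq_norm]
    have : x - δ • v - x = -(δ • v) := by ring_nf
    rw [this, norm_neg, norm_smul]
    have h1 : ‖δ‖ = δ := abs_of_pos hδpos
    rw [h1, hδ, div_mul_eq_mul_div, div_lt_iff₀ (by positivity)]
    nlinarith [norm_nonneg v]
  obtain ⟨w, hw, hwx⟩ := interior_subset hmem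
  refine ⟨w + δ • (1 : Fin (n + 1) → ℝ), fun i => ?_, ?_⟩
  · have := hw i
    simp only [Pi.add_apply, Pi.smul_apply, smul_eq_mul, Pi.one_apply, mul_one]
    linarith
  · rw [Matrix.mulVec_add, hwx, Matrix.mulVec_smul, ← hv]
    abel

lemma interior_translate {N : ℕ} (a : Fin N → ℝ) (S : Set (Fin N → ℝ)) :
    interior ((fun c => a + c) '' S) = (fun c => a + c) '' interior S := by
  have h := (Homeomorph.addLeft a).image_interior S
  simpa [Homeomorph.coe_addLeft] using h.symm

/-- the pairwise condition characterizing both sets -/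
def pcond {n : ℕ} (z : Fin (n + 1) → ℤ) (t : ℝ) : Prop :=
  ∀ i j, 0 < z i → z j < 0 →
    ((z i : ℝ)) * (-(z j : ℝ)) ≤ (t + 1) * ((z i : ℝ) - (z j : ℝ))

lemma Ru_eq {n : ℕ} (A : Matrix (Fin n) (Fin (n + 1)) ℤ) (z : Fin (n + 1) → ℤ)
    (u : Fin n → ℤ) (hu : u = fun j => ∑ i, if 0 ≤ z i then z i * A j i else 0) :
    (Rmat A).mulVec (fun i => max ((z i : ℝ)) 0) = Rvec u := by
  funext j
  simp only [Matrix.mulVec, dotProduct, Rmat, Matrix.map_apply, Rvec, hu]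
  push_cast
  apply Finset.sum_congr rfl
  intro i _
  by_cases h : 0 ≤ z i
  · rw [if_pos h, max_eq_left (by exact_mod_cast h : (0:ℝ) ≤ (z i : ℝ))]
    ring
  · push_neg at h
    rw [if_neg (not_le.2 h), max_eq_right (by exact_mod_cast h.le : ((z i : ℝ)) ≤ 0), mul_zero]

lemma RHS_char {n : ℕ} (A : Matrix (Fin n) (Fin (n + 1)) ℤ)
    (hgcd : Finset.univ.gcd (fun I : Fin n ↪ Fin (n + 1) => (A.submatrix id ⇑I).det) = 1)
    (z : Fin (n + 1) → ℤ) (hzprim : Finset.univ.gcd z = 1) (hzker : A.mulVec z = 0)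
    (hmix : (∃ i, 0 < z i) ∧ (∃ j, z j < 0))
    (u : Fin n → ℤ) (hu : u = fun j => ∑ i, if 0 ≤ z i then z i * A j i else 0) :
    {γ : ℝ | 0 ≤ γ ∧ ∃ c ∈ coneOf A, γ • vA A = c + Rvec u - vA A} =
      {t : ℝ | 0 ≤ t ∧ pcond z t} := by
  have hvA : vA A = (Rmat A).mulVec (1 : Fin (n + 1) → ℝ) := rfl
  have hRz : (Rmat A).mulVec (Rvec z) = 0 := rmat_mulVec_z A z hzker
  have hRu := Ru_eq A z u hu
  ext γ
  simp only [Set.mem_setOf_eq]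
  constructor
  · rintro ⟨hγ0, c, ⟨w0, hw0, rfl⟩, hc⟩
    refine ⟨hγ0, ?_⟩
    intro i j hi hj
    -- A ((γ+1)•1 - zplus - w0) = 0
    have hker : (Rmat A).mulVec
        ((γ + 1) • (1 : Fin (n + 1) → ℝ) - (fun i => max ((z i : ℝ)) 0) - w0) = 0 := by
      rw [Matrix.mulVec_sub, Matrix.mulVec_sub, Matrix.mulVec_smul, hRu]
      have hAw0 : (Rmat A).mulVec w0 = γ • vA A + vA A - Rvec u := by
        rw [hc]; abel
      rw [hAw0, hvA]
      module
    obtain ⟨lam, hlam⟩ := real_kernel A hgcd z hzprim hzker _ hker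
    have hli := congrFun hlam i
    have hlj := congrFun hlam j
    simp only [Pi.sub_apply, Pi.smul_apply, Pi.one_apply, smul_eq_mul, mul_one, Rvec] at hli hlj
    have hzi : (0:ℝ) < (z i : ℝ) := by exact_mod_cast hi
    have hzj : ((z j : ℝ)) < 0 := by exact_mod_cast hj
    have hmaxi : max ((z i : ℝ)) 0 = (z i : ℝ) := max_eq_left hzi.le
    have hmaxj : max ((z j : ℝ)) 0 = 0 := max_eq_right hzj.le
    rw [hmaxi] at hli
    rw [hmaxj] at hlj
    have hw0i := hw0 i
    have hw0j := hw0 j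
    -- hli : γ + 1 - z i - w0 i = lam * z i, so w0 i = γ+1 - z i - lam * z i ≥ 0
    have h1 : 0 ≤ γ + 1 - (z i : ℝ) - lam * (z i : ℝ) := by linarith
    have h2 : 0 ≤ γ + 1 - lam * (z j : ℝ) := by linarith
    nlinarith [mul_nonneg h1 (neg_nonneg.2 hzj.le), mul_nonneg h2 hzi.le]
  · rintro ⟨hγ0, hcond⟩
    refine ⟨hγ0, ?_⟩
    obtain ⟨⟨i1, hi1⟩, ⟨j1, hj1⟩⟩ := hmix
    set Neg : Finset (Fin (n + 1)) := Finset.univ.filter (fun j => z j < 0) with hNeg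
    have hNegne : Neg.Nonempty := ⟨j1, by simp [hNeg, hj1]⟩
    obtain ⟨j0, hj0mem, hj0max⟩ := Finset.exists_max_image Neg (fun j => (γ + 1) / (z j : ℝ)) hNegne
    have hj0 : z j0 < 0 := by simpa [hNeg] using hj0mem
    have hzj0 : ((z j0 : ℝ)) < 0 := by exact_mod_cast hj0
    set lam : ℝ := (γ + 1) / (z j0 : ℝ) with hlam
    set w : Fin (n + 1) → ℝ := fun i => γ + 1 - max ((z i : ℝ)) 0 - lam * (z i : ℝ) with hw
    have hwpos : ∀ i, 0 ≤ w i := by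
      intro i
      rcases lt_trichotomy (z i) 0 with h | h | h
      · -- z i < 0 : w i = γ+1 - lam * z i, lam ≥ (γ+1)/z i
        have hzi : ((z i : ℝ)) < 0 := by exact_mod_cast h
        have hmem : i ∈ Neg := by simp [hNeg, h]
        have hle : (γ + 1) / (z i : ℝ) ≤ lam := hj0max i hmem
        have : lam * (z i : ℝ) ≤ ((γ + 1) / (z i : ℝ)) * (z i : ℝ) :=
          mul_le_mul_of_nonpos_right hle hzi.le
        rw [div_mul_cancel₀ _ hzi.ne] at this
        simp only [hw, max_eq_right hzi.le]
        linarith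
      · simp only [hw, h, Int.cast_zero, max_self, mul_zero, sub_zero]
        linarith
      · have hzi : (0:ℝ) < (z i : ℝ) := by exact_mod_cast h
        have hch := hcond i j0 h hj0
        simp only [hw, max_eq_left hzi.le]
        have key : 0 ≤ (γ + 1) * ((z i : ℝ) - (z j0 : ℝ)) - (z i : ℝ) * (-(z j0 : ℝ)) := by
          linarith
        have hL : lam * (z j0 : ℝ) = γ + 1 := by
          rw [hlam]; exact div_mul_cancel₀ _ hzj0.ne
        have hL2 : lam * (z i : ℝ) * (z j0 : ℝ) = (γ + 1) * (z i : ℝ) := by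
          rw [show lam * (z i : ℝ) * (z j0 : ℝ) = lam * (z j0 : ℝ) * (z i : ℝ) from by ring, hL]
        have hprod : 0 ≤ (γ + 1 - (z i : ℝ) - lam * (z i : ℝ)) * (-(z j0 : ℝ)) := by
          nlinarith [key, hL2]
        nlinarith [hprod, hzj0]
    refine ⟨(Rmat A).mulVec w, ⟨w, hwpos, rfl⟩, ?_⟩
    have hwdef : w = (γ + 1) • (1 : Fin (n + 1) → ℝ) - (fun i => max ((z i : ℝ)) 0)
        - lam • Rvec z := by
      funext i
      simp only [hw, Pi.sub_apply, Pi.smul_apply, Pi.one_apply, smul_eq_mul, mul_one, Rvec]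
    rw [hwdef, Matrix.mulVec_sub, Matrix.mulVec_sub, Matrix.mulVec_smul, Matrix.mulVec_smul,
      hRu, hRz, smul_zero, ← hvA]
    funext k
    simp only [Pi.add_apply, Pi.sub_apply, Pi.smul_apply, smul_eq_mul, Pi.zero_apply]
    ring

lemma cbound1 (c q x0v : ℤ) (hq : 1 ≤ q) (h : 0 ≤ x0v + c * q) : -|x0v| ≤ c := by
  nlinarith [le_abs_self x0v, abs_nonneg x0v, neg_abs_le x0v]

lemma cbound2 (c q x0v : ℤ) (hq : q ≤ -1) (h : 0 ≤ x0v + c * q) : c ≤ |x0v| := by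
  nlinarith [le_abs_self x0v, abs_nonneg x0v, neg_abs_le x0v]

set_option maxHeartbeats 1000000 in
lemma LHS_char {n : ℕ} (A : Matrix (Fin n) (Fin (n + 1)) ℤ)
    (hgcd : Finset.univ.gcd (fun I : Fin n ↪ Fin (n + 1) => (A.submatrix id ⇑I).det) = 1)
    (z : Fin (n + 1) → ℤ) (hzprim : Finset.univ.gcd z = 1) (hzker : A.mulVec z = 0)
    (hzgen : ∀ x : Fin (n + 1) → ℤ, A.mulVec x = 0 → ∃ c : ℤ, x = c • z)
    (hmix : (∃ i, 0 < z i) ∧ (∃ j, z j < 0)) :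
    {t : ℝ | 0 ≤ t ∧ ∀ b : Fin n → ℤ,
        Rvec b ∈ interior ((fun c => t • vA A + c) '' coneOf A) → b ∈ feas 1 A} =
      {t : ℝ | 0 ≤ t ∧ pcond z t} := by
  have hvA : vA A = (Rmat A).mulVec (1 : Fin (n + 1) → ℝ) := rfl
  have hRz : (Rmat A).mulVec (Rvec z) = 0 := rmat_mulVec_z A z hzker
  obtain ⟨⟨i1, hi1⟩, ⟨j1, hj1⟩⟩ := hmix
  ext t
  simp only [Set.mem_setOf_eq]
  constructor
  · -- LHS ⊆ pcond : by contradiction, construct a bad b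
    rintro ⟨ht0, H⟩
    refine ⟨ht0, ?_⟩
    intro i j hi hj
    by_contra hlt
    push_neg at hlt
    have hij : i ≠ j := by
      intro h; rw [h] at hi; exact absurd hj (not_lt.2 hi.le)
    set q : ℤ := z i with hqdef
    set p : ℤ := -z j with hpdef
    have hq : 0 < q := hi
    have hp : 0 < p := by simp [hpdef]; omega
    have hqR : (0:ℝ) < (q:ℝ) := by exact_mod_cast hq
    have hpR : (0:ℝ) < (p:ℝ) := by exact_mod_cast hp
    have hzjR : ((z j : ℝ)) = -(p:ℝ) := by
      rw [hpdef]; push_cast; ring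
    have hziR : ((z i : ℝ)) = (q:ℝ) := by rw [hqdef]
    -- the gap in the s-interval is nonempty
    have hgap : (t + 1) / (q:ℝ) < (((p:ℝ) - 1) - t) / (p:ℝ) := by
      rw [div_lt_div_iff₀ hqR hpR]
      rw [hziR, hzjR] at hlt
      nlinarith [hlt]
    set s : ℝ := ((t + 1) / (q:ℝ) + (((p:ℝ) - 1) - t) / (p:ℝ)) / 2 with hsdef
    have hs1 : (t + 1) / (q:ℝ) < s := by rw [hsdef]; linarith
    have hs2 : s < (((p:ℝ) - 1) - t) / (p:ℝ) := by rw [hsdef]; linarith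
    set B : ℕ := Finset.univ.sup (fun k => (z k).natAbs) with hBdef
    have hB : ∀ k, |z k| ≤ (B:ℤ) := fun k => by
      rw [Int.abs_eq_natAbs]
      exact_mod_cast Finset.le_sup (f := fun k => (z k).natAbs) (Finset.mem_univ k)
    obtain ⟨T, hT⟩ := exists_int_gt (t + |s| * ((B:ℝ) + 1))
    set x0 : Fin (n + 1) → ℤ := fun k => if k = i then (-1:ℤ) else if k = j then p - 1 else T
      with hx0def
    set y' : Fin (n + 1) → ℝ := fun k => (x0 k : ℝ) + s * (z k : ℝ) - t with hy'def
    have hy' : ∀ k, 0 < y' k := by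
      intro k
      rw [hy'def]
      by_cases hk : k = i
      · simp only [hx0def, hk, if_pos rfl]
        have := (div_lt_iff₀ hqR).1 hs1
        rw [hziR]
        push_cast
        linarith
      · by_cases hk' : k = j
        · simp only [hx0def, hk', if_neg hij.symm, if_pos rfl]
          subst hk'
          have := (lt_div_iff₀ hpR).1 hs2
          rw [hzjR]
          push_cast
          nlinarith
        · simp only [hx0def, if_neg hk, if_neg hk']
          have h1 : |s * (z k : ℝ)| ≤ |s| * ((B:ℝ) + 1) := by
            rw [abs_mul]
            apply mul_le_mul_of_nonneg_left _ (abs_nonneg s)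
            have : |(z k : ℝ)| = ((|z k| : ℤ) : ℝ) := by push_cast; ring
            rw [this]
            have : ((|z k| : ℤ) : ℝ) ≤ ((B:ℕ):ℝ) := by exact_mod_cast hB k
            linarith
          have h2 : -( |s| * ((B:ℝ) + 1)) ≤ s * (z k : ℝ) := by
            have := neg_abs_le (s * (z k : ℝ))
            linarith
          linarith
    have hbmem : Rvec (A.mulVec x0) ∈
        interior ((fun c => t • vA A + c) '' coneOf A) := by
      rw [interior_translate]
      refine ⟨(Rmat A).mulVec y', pos_subset_interior A hgcd _ y' hy' rfl, ?_⟩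
      have hy'eq : y' = Rvec x0 + s • Rvec z - t • (1 : Fin (n + 1) → ℝ) := by
        funext k
        simp only [hy'def, Pi.add_apply, Pi.sub_apply, Pi.smul_apply, Pi.one_apply,
          smul_eq_mul, mul_one, Rvec]
      rw [hy'eq, Matrix.mulVec_sub, Matrix.mulVec_add, Matrix.mulVec_smul, Matrix.mulVec_smul,
        hRz, smul_zero, rmat_mulVec, ← hvA]
      funext r
      simp only [Pi.add_apply, Pi.sub_apply, Pi.smul_apply, smul_eq_mul, Pi.zero_apply]
      ring
    have hfeas := H (A.mulVec x0) hbmem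
    have hne : {x : Fin (n + 1) → ℤ | (∀ i, 0 ≤ x i) ∧ A.mulVec x = A.mulVec x0}.Nonempty := by
      rcases Set.eq_empty_or_nonempty
        {x : Fin (n + 1) → ℤ | (∀ i, 0 ≤ x i) ∧ A.mulVec x = A.mulVec x0} with h | h
      · rw [feas, Set.mem_setOf_eq, h, Set.ncard_empty] at hfeas
        omega
      · exact h
    obtain ⟨x, hxpos, hxA⟩ := hne
    have hker0 : A.mulVec (x - x0) = 0 := by
      rw [Matrix.mulVec_sub, hxA, sub_self]
    obtain ⟨c, hc⟩ := hzgen _ hker0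
    have hx0i : x0 i = -1 := by rw [hx0def]; exact if_pos rfl
    have hx0j : x0 j = p - 1 := by
      show (if j = i then (-1:ℤ) else if j = j then p - 1 else T) = p - 1
      rw [if_neg (Ne.symm hij), if_pos rfl]
    have hci : x i = -1 + c * q := by
      have h := congrFun hc i
      simp only [Pi.sub_apply, Pi.smul_apply, smul_eq_mul] at h
      rw [hx0i, ← hqdef] at h
      omega
    have hcj : x j = (p - 1) - c * p := by
      have h := congrFun hc j
      simp only [Pi.sub_apply, Pi.smul_apply, smul_eq_mul] at h
      have hzj : z j = -p := by rw [hpdef]; ring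
      rw [hx0j, hzj] at h
      have hring : c * (-p) + c * p = 0 := by ring
      omega
    have h1 := hxpos i
    have h2 := hxpos j
    rw [hci] at h1
    rw [hcj] at h2
    have hc1 : 1 ≤ c := by nlinarith
    nlinarith
  · -- pcond ⊆ LHS : every interior lattice point is feasible
    rintro ⟨ht0, hcond⟩
    refine ⟨ht0, ?_⟩
    intro b hb
    rw [interior_translate] at hb
    obtain ⟨c0, hc0int, hc0eq⟩ := hb
    obtain ⟨y, hy, hyc⟩ := interior_subset_pos A c0 hc0int
    obtain ⟨x0, hx0⟩ := int_surj A hgcd b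
    have hker : (Rmat A).mulVec (t • (1 : Fin (n + 1) → ℝ) + y - Rvec x0) = 0 := by
      rw [Matrix.mulVec_sub, Matrix.mulVec_add, Matrix.mulVec_smul, hyc, rmat_mulVec, hx0,
        ← hvA]
      rw [← hc0eq]
      beta_reduce
      abel
    obtain ⟨s0, hs0⟩ := real_kernel A hgcd z hzprim hzker _ hker
    have star : ∀ k, t + y k - (x0 k : ℝ) = s0 * (z k : ℝ) := by
      intro k
      have := congrFun hs0 k
      simpa [Pi.add_apply, Pi.sub_apply, Pi.smul_apply, Pi.one_apply, smul_eq_mul, mul_one,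
        Rvec] using this
    -- pick j0 minimizing x0 j / (-z j) over Neg
    set Neg : Finset (Fin (n + 1)) := Finset.univ.filter (fun j => z j < 0) with hNeg
    have hNegne : Neg.Nonempty := ⟨j1, by simp [hNeg, hj1]⟩
    obtain ⟨j0, hj0mem, hj0min⟩ :=
      Finset.exists_min_image Neg (fun j => (x0 j : ℝ) / (-(z j : ℝ))) hNegne
    have hj0 : z j0 < 0 := by simpa [hNeg] using hj0mem
    set p : ℤ := -z j0 with hpdef
    have hp : 0 < p := by omega
    have hpR : (0:ℝ) < (p:ℝ) := by exact_mod_cast hp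
    have hzj0R : ((z j0 : ℝ)) = -(p:ℝ) := by rw [hpdef]; push_cast; ring
    set s : ℤ := x0 j0 / p with hsdef
    set r : ℤ := x0 j0 % p with hrdef
    have hid : p * s + r = x0 j0 := Int.mul_ediv_add_emod (x0 j0) p
    have hr0 : 0 ≤ r := Int.emod_nonneg _ (by omega)
    have hr1 : r < p := Int.emod_lt_of_pos _ hp
    have hidR : (p:ℝ) * (s:ℝ) + (r:ℝ) = (x0 j0 : ℝ) := by exact_mod_cast hid
    have hr0R : (0:ℝ) ≤ (r:ℝ) := by exact_mod_cast hr0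
    have hr1R : (r:ℝ) ≤ (p:ℝ) - 1 := by
      have : r ≤ p - 1 := by omega
      exact_mod_cast this
    have hsle : (s:ℝ) ≤ (x0 j0 : ℝ) / (p:ℝ) := by
      rw [le_div_iff₀ hpR]
      nlinarith
    -- the candidate solution
    have hsol : ∀ k, 0 ≤ x0 k + s * z k := by
      intro k
      rcases lt_trichotomy (z k) 0 with hneg | h0 | hpos
      · have hmem : k ∈ Neg := by simp [hNeg, hneg]
        have hmin := hj0min k hmem
        rw [hzj0R] at hmin
        simp only [neg_neg] at hmin
        have hzkR : (0:ℝ) < -(z k : ℝ) := by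
          have : ((z k : ℝ)) < 0 := by exact_mod_cast hneg
          linarith
        have h3 : (s:ℝ) ≤ (x0 k : ℝ) / (-(z k : ℝ)) := le_trans (le_trans hsle hmin) le_rfl
        have h4 : (s:ℝ) * (-(z k : ℝ)) ≤ (x0 k : ℝ) := by
          rw [← le_div_iff₀ hzkR]
          exact h3
        have : (0:ℝ) ≤ (x0 k : ℝ) + (s:ℝ) * (z k : ℝ) := by linarith
        exact_mod_cast this
      · have hst := star k
        rw [h0] at hst
        simp only [Int.cast_zero, mul_zero] at hst
        have : (0:ℝ) < (x0 k : ℝ) := by linarith [hy k, ht0]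
        have : 0 ≤ x0 k := by exact_mod_cast this.le
        simpa [h0] using this
      · -- positive coordinate: use pcond
        set qk : ℤ := z k with hqkdef
        have hqkR : (0:ℝ) < (qk:ℝ) := by exact_mod_cast hpos
        have hcnd := hcond k j0 hpos hj0
        rw [hzj0R, ← hqkdef] at hcnd
        -- hcnd : qk * p ≤ (t+1) * (qk + p)
        have hx0k : (x0 k : ℝ) = t + y k - s0 * (qk:ℝ) := by
          have := star k
          rw [← hqkdef] at this
          linarith
        have hx0j0 : (x0 j0 : ℝ) = t + y j0 + s0 * (p:ℝ) := by
          have := star j0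
          rw [hzj0R] at this
          linarith
        have key : -((p:ℝ)) < (p:ℝ) * ((x0 k : ℝ) + (s:ℝ) * (qk:ℝ)) := by
          have e1 : (p:ℝ) * ((x0 k : ℝ) + (s:ℝ) * (qk:ℝ)) =
              (p:ℝ) * (x0 k : ℝ) + (qk:ℝ) * ((p:ℝ) * (s:ℝ)) := by ring
          have e2 : (p:ℝ) * (s:ℝ) = (x0 j0 : ℝ) - (r:ℝ) := by linarith
          have e3 : (qk:ℝ) * ((x0 j0 : ℝ) - ((p:ℝ) - 1)) ≤ (qk:ℝ) * ((x0 j0 : ℝ) - (r:ℝ)) := by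
            apply mul_le_mul_of_nonneg_left _ hqkR.le
            linarith
          have e4 : (p:ℝ) * (x0 k : ℝ) + (qk:ℝ) * ((x0 j0 : ℝ) - ((p:ℝ) - 1)) =
              (p:ℝ) * (t + y k) + (qk:ℝ) * (t + y j0) - (qk:ℝ) * (p:ℝ) + (qk:ℝ) := by
            rw [hx0k, hx0j0]; ring
          nlinarith [mul_pos hpR (hy k), mul_pos hqkR (hy j0), hcnd]
        have hreal : (-1:ℝ) < (x0 k : ℝ) + (s:ℝ) * (qk:ℝ) := by nlinarith [key, hpR]
        have hint : (-1:ℤ) < x0 k + s * qk := by exact_mod_cast hreal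
        omega
    -- conclude feasibility
    set S : Set (Fin (n + 1) → ℤ) := {x | (∀ i, 0 ≤ x i) ∧ A.mulVec x = b} with hS
    have hsolmem : (x0 + s • z) ∈ S := by
      constructor
      · intro k
        simp only [Pi.add_apply, Pi.smul_apply, smul_eq_mul]
        exact hsol k
      · rw [Matrix.mulVec_add, Matrix.mulVec_smul, hzker, smul_zero, add_zero, hx0]
    have hsub : S ⊆ (fun c : ℤ => x0 + c • z) '' (Set.Icc (-|x0 i1|) (|x0 j1|)) := by
      rintro x ⟨hxpos, hxA⟩
      have hker0 : A.mulVec (x - x0) = 0 := by rw [Matrix.mulVec_sub, hxA, hx0, sub_self]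
      obtain ⟨c, hc⟩ := hzgen _ hker0
      have hxe : x = x0 + c • z := by
        funext k
        have := congrFun hc k
        simp only [Pi.sub_apply, Pi.smul_apply, smul_eq_mul] at this ⊢
        simp only [Pi.add_apply, Pi.smul_apply, smul_eq_mul]
        omega
      refine ⟨c, ⟨?_, ?_⟩, hxe.symm⟩
      · have := hxpos i1
        rw [hxe] at this
        simp only [Pi.add_apply, Pi.smul_apply, smul_eq_mul] at this
        exact cbound1 c (z i1) (x0 i1) (by omega) this
      · have := hxpos j1
        rw [hxe] at this
        simp only [Pi.add_apply, Pi.smul_apply, smul_eq_mul] at this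
        exact cbound2 c (z j1) (x0 j1) (by omega) this
    have hfin : S.Finite := Set.Finite.subset ((Set.finite_Icc _ _).image _) hsub
    show 1 ≤ Set.ncard S
    exact (Set.ncard_pos hfin).2 ⟨_, hsolmem⟩


/-- For m = n−1 (here: A with n rows and n+1 columns), g₁(A) is the least γ ≥ 0
with γ·v ∈ C + u − v, where u = Σ_{i : zᵢ ≥ 0} zᵢ aᵢ. -/
theorem stmt_16 {n : ℕ} (hn : 1 ≤ n) (A : Matrix (Fin n) (Fin (n + 1)) ℤ)
    (hA : regular A) (z : Fin (n + 1) → ℤ)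
    (hzprim : Finset.univ.gcd z = 1)
    (hzker : A.mulVec z = 0)
    (hzgen : ∀ x : Fin (n + 1) → ℤ, A.mulVec x = 0 → ∃ c : ℤ, x = c • z)
    (u : Fin n → ℤ) (hu : u = fun j => ∑ i, if 0 ≤ z i then z i * A j i else 0) :
    gFrob 1 A = sInf {γ : ℝ | 0 ≤ γ ∧ ∃ c ∈ coneOf A, γ • vA A = c + Rvec u - vA A} := by
  have hmix := z_mixed A hA.2 z hzprim hzker
  rw [gFrob, gDiag]
  congr 1
  rw [LHS_char A hA.1 z hzprim hzker hzgen hmix,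
    ← RHS_char A hA.1 z hzprim hzker hmix u hu]

end
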